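/- (Correctness of the Thomas algorithm for the matrix equation D·P = M) Under the tridiagonal setup with all pivots u i nonzero, D is invertible; moreover, for any natural number m and any n×m real matrix M, if Y is defined row-wise by Y(0,·) = M(0,·), Y(i,·) = M(i,·) − l i · Y(i−1,·) for i ≥ 1, and P is defined row-wise by P(n−1,·) = (1/u(n−1)) · Y(n−1,·), P(i,·) = (1/u i) · (Y(i,·) − c i · P(i+1,·)) for i ≤ n−2, then D · P = M, i.e. P = D⁻¹ · M. -/

import Mathlib

open Matrix

lemma two_term_sum {n : ℕ} (f : Fin n → ℝ) (i j : Fin n) (hij : i ≠ j)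
    (h : ∀ k, k ≠ i → k ≠ j → f k = 0) : (∑ k, f k) = f i + f j := by
  rw [← Finset.add_sum_erase _ f (Finset.mem_univ i)]
  congr 1
  rw [Finset.sum_eq_single_of_mem j (by simp [hij.symm])]
  intro k hk hkj
  exact h k (by simpa using (Finset.mem_erase.mp hk).1) hkj

lemma one_term_sum {n : ℕ} (f : Fin n → ℝ) (i : Fin n)
    (h : ∀ k, k ≠ i → f k = 0) : (∑ k, f k) = f i :=
  Finset.sum_eq_single_of_mem i (Finset.mem_univ i) (fun k _ hk => h k hk)

/-- **Correctness of the Thomas algorithm for `D · P = M`.** Under the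
tridiagonal setup with all pivots nonzero, `D` is invertible, and the matrix
`P` produced by the forward and backward substitution sweeps satisfies
`D · P = M`, i.e. `P = D⁻¹ · M`. -/
theorem thomas_algorithm_correct
    (n : ℕ) (hn : 1 ≤ n) (d a c : Fin n → ℝ)
    (u l : Fin n → ℝ)
    (hu0 : ∀ i : Fin n, (i : ℕ) = 0 → u i = d i)
    (hl : ∀ i j : Fin n, (i : ℕ) = (j : ℕ) + 1 → l i = a i / u j)
    (hu : ∀ i j : Fin n, (i : ℕ) = (j : ℕ) + 1 → u i = d i - l i * c j)
    (hpiv : ∀ i : Fin n, u i ≠ 0)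
    (D : Matrix (Fin n) (Fin n) ℝ)
    (hD : ∀ i j : Fin n, D i j =
      if i = j then d i
      else if (i : ℕ) = (j : ℕ) + 1 then a i
      else if (j : ℕ) = (i : ℕ) + 1 then c i
      else 0)
    (m : ℕ) (M Y P : Matrix (Fin n) (Fin m) ℝ)
    (hY0 : ∀ i : Fin n, (i : ℕ) = 0 → ∀ j : Fin m, Y i j = M i j)
    (hYrec : ∀ i i' : Fin n, (i : ℕ) = (i' : ℕ) + 1 → ∀ j : Fin m,
      Y i j = M i j - l i * Y i' j)
    (hPlast : ∀ i : Fin n, (i : ℕ) + 1 = n → ∀ j : Fin m,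
      P i j = (1 / u i) * Y i j)
    (hPrec : ∀ i i' : Fin n, (i' : ℕ) = (i : ℕ) + 1 → ∀ j : Fin m,
      P i j = (1 / u i) * (Y i j - c i * P i' j)) :
    IsUnit D.det ∧ D * P = M ∧ P = D⁻¹ * M := by
  classical
  -- L and U factors
  set L : Matrix (Fin n) (Fin n) ℝ := fun i k =>
    if i = k then 1 else if (i : ℕ) = (k : ℕ) + 1 then l i else 0 with hLdef
  set U : Matrix (Fin n) (Fin n) ℝ := fun i k =>
    if i = k then u i else if (k : ℕ) = (i : ℕ) + 1 then c i else 0 with hUdef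
  -- D = L * U
  have hDLU : D = L * U := by
    ext i k
    rw [Matrix.mul_apply, hD]
    by_cases h0 : (i : ℕ) = 0
    · rw [one_term_sum (fun j => L i j * U j k) i (by
        intro j hj
        have : L i j = 0 := by
          simp only [hLdef]
          rw [if_neg (fun e => hj (e.symm)), if_neg (by omega)]
        simp [this])]
      simp only [hLdef, hUdef, if_pos rfl, one_mul]
      by_cases hik : i = k
      · rw [if_pos hik, if_pos hik, hu0 i h0]
      · rw [if_neg hik, if_neg hik, if_neg (by omega)]
    · -- i ≥ 1
      have hi1 : 1 ≤ (i : ℕ) := by omega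
      set i' : Fin n := ⟨(i : ℕ) - 1, by omega⟩ with hi'def
      have hii' : (i : ℕ) = (i' : ℕ) + 1 := by simp [hi'def]; omega
      have hne : i ≠ i' := by
        intro e; rw [e] at hii'; omega
      rw [two_term_sum (fun j => L i j * U j k) i i' hne (by
        intro j hj1 hj2
        have : L i j = 0 := by
          simp only [hLdef]
          rw [if_neg (fun e => hj1 e.symm), if_neg (by
            intro e
            apply hj2
            apply Fin.ext
            omega)]
        simp [this])]
      have hLii : L i i = 1 := by simp [hLdef]
      have hLii' : L i i' = l i := by
        simp only [hLdef]
        rw [if_neg hne, if_pos hii']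
      rw [hLii, hLii', one_mul]
      by_cases hik : i = k
      · subst hik
        have hUii : U i i = u i := by simp [hUdef]
        have hUi'i : U i' i = c i' := by
          simp only [hUdef]
          rw [if_neg (fun e => hne e.symm), if_pos hii']
        rw [if_pos rfl, hUii, hUi'i, hu i i' hii']
        ring
      · rw [if_neg hik]
        by_cases hik1 : (i : ℕ) = (k : ℕ) + 1
        · -- k = i', subdiagonal
          have hki' : i' = k := by apply Fin.ext; omega
          have hUik : U i k = 0 := by
            simp only [hUdef]
            rw [if_neg hik, if_neg (by omega)]
          have hUi'k : U i' k = u i' := by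
            simp only [hUdef]
            rw [if_pos hki']
          rw [if_pos hik1, hUik, hUi'k, hl i i' hii']
          field_simp [hpiv i']
          ring
        · rw [if_neg hik1]
          by_cases hki1 : (k : ℕ) = (i : ℕ) + 1
          · have hUik : U i k = c i := by
              simp only [hUdef]
              rw [if_neg hik, if_pos hki1]
            have hUi'k : U i' k = 0 := by
              simp only [hUdef]
              rw [if_neg (by intro e; have := congrArg Fin.val e; omega),
                if_neg (by omega)]
            rw [if_pos hki1, hUik, hUi'k]
            ring
          · have hUik : U i k = 0 := by
              simp only [hUdef]
              rw [if_neg hik, if_neg hki1]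
            have hUi'k : U i' k = 0 := by
              simp only [hUdef]
              rw [if_neg (by intro e; have := congrArg Fin.val e; omega),
                if_neg (by omega)]
            rw [if_neg hki1, hUik, hUi'k]
            ring
  -- determinants
  have hLtri : L.BlockTriangular OrderDual.toDual := by
    intro i k h
    have h' : (i : ℕ) < (k : ℕ) := h
    simp only [hLdef]
    rw [if_neg (by intro e; rw [e] at h'; omega), if_neg (by omega)]
  have hUtri : U.BlockTriangular id := by
    intro i k h
    have h' : (k : ℕ) < (i : ℕ) := h
    simp only [hUdef]
    rw [if_neg (by intro e; rw [e] at h'; omega), if_neg (by omega)]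
  have hdet : D.det = ∏ i, u i := by
    rw [hDLU, Matrix.det_mul, Matrix.det_of_lowerTriangular L hLtri,
      Matrix.det_of_upperTriangular hUtri]
    have : ∀ i : Fin n, L i i = 1 := fun i => by simp [hLdef]
    simp only [this, hUdef, if_pos rfl]
    simp
  have hunit : IsUnit D.det := by
    rw [hdet]
    exact (Finset.prod_ne_zero_iff.mpr (fun i _ => hpiv i)).isUnit
  -- U * P = Y
  have hUP : U * P = Y := by
    ext i j
    rw [Matrix.mul_apply]
    by_cases hlast : (i : ℕ) + 1 = n
    · rw [one_term_sum (fun k => U i k * P k j) i (by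
        intro k hk
        have : U i k = 0 := by
          simp only [hUdef]
          rw [if_neg (fun e => hk e.symm), if_neg (by
            intro e
            have := k.isLt
            omega)]
        simp [this])]
      have : U i i = u i := by simp [hUdef]
      rw [this, hPlast i hlast j]
      field_simp [hpiv i]
    · set i' : Fin n := ⟨(i : ℕ) + 1, by have := i.isLt; omega⟩ with hi'def
      have hii' : (i' : ℕ) = (i : ℕ) + 1 := by simp [hi'def]
      have hne : i ≠ i' := by intro e; rw [e] at hii'; omega
      rw [two_term_sum (fun k => U i k * P k j) i i' hne (by
        intro k hk1 hk2
        have : U i k = 0 := by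
          simp only [hUdef]
          rw [if_neg (fun e => hk1 e.symm), if_neg (by
            intro e; apply hk2; apply Fin.ext; omega)]
        simp [this])]
      have h1 : U i i = u i := by simp [hUdef]
      have h2 : U i i' = c i := by
        simp only [hUdef]
        rw [if_neg hne]
        simp [hii']
      rw [h1, h2, hPrec i i' hii' j]
      field_simp [hpiv i]
      ring
  -- L * Y = M
  have hLY : L * Y = M := by
    ext i j
    rw [Matrix.mul_apply]
    by_cases h0 : (i : ℕ) = 0
    · rw [one_term_sum (fun k => L i k * Y k j) i (by
        intro k hk
        have : L i k = 0 := by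
          simp only [hLdef]
          rw [if_neg (fun e => hk e.symm), if_neg (by omega)]
        simp [this])]
      have : L i i = 1 := by simp [hLdef]
      rw [this, one_mul, hY0 i h0 j]
    · set i' : Fin n := ⟨(i : ℕ) - 1, by omega⟩ with hi'def
      have hii' : (i : ℕ) = (i' : ℕ) + 1 := by simp [hi'def]; omega
      have hne : i ≠ i' := by intro e; rw [e] at hii'; omega
      rw [two_term_sum (fun k => L i k * Y k j) i i' hne (by
        intro k hk1 hk2
        have : L i k = 0 := by
          simp only [hLdef]
          rw [if_neg (fun e => hk1 e.symm), if_neg (by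
            intro e; apply hk2; apply Fin.ext; omega)]
        simp [this])]
      have h1 : L i i = 1 := by simp [hLdef]
      have h2 : L i i' = l i := by
        simp only [hLdef]
        rw [if_neg hne, if_pos hii']
      rw [h1, h2, one_mul, hYrec i i' hii' j]
      ring
  have hDP : D * P = M := by
    rw [hDLU, Matrix.mul_assoc, hUP, hLY]
  refine ⟨hunit, hDP, ?_⟩
  have h2 : D⁻¹ * (D * P) = D⁻¹ * M := congrArg _ hDP
  rw [← Matrix.mul_assoc, Matrix.nonsing_inv_mul D hunit, Matrix.one_mul] at h2
  exact h2
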